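/- Let X̄^b ∈ ℝ^{N×M} be a fixed background ensemble and Ȳ^b := H X̄^b. If W̄ : [0,1] → ℝ^{M×M} is a differentiable solution of the ensemble-space (DETKBF) equation dW̄/ds = − (1/(M−1)) · W̄ (I − U) W̄ᵀ (Ȳ^b)ᵀ R⁻¹ [ (1/2) Ȳ^b W̄ (I + U) − y·1ᵀ ] with W̄(0) = I, then X̄(s) := X̄^b W̄(s) is a solution of the state-space BR10 equation dX̄/ds = − (1/(M−1)) X̄ (I − U) X̄ᵀ Hᵀ R⁻¹ [ (1/2) H X̄ (I + U) − y·1ᵀ ] with X̄(0) = X̄^b. -/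

import Mathlib

open Matrix

attribute [local instance] Matrix.normedAddCommGroup Matrix.normedSpace

/-- If `W̄` solves the ensemble-space (DETKBF) equation
`dW̄/ds = −(1/(M−1)) W̄ (I−U) W̄ᵀ (Ȳ^b)ᵀ R⁻¹ [ (1/2) Ȳ^b W̄ (I+U) − y·1ᵀ ]` with
`W̄(0) = I`, where `Ȳ^b := H X̄^b`, then `X̄(s) := X̄^b W̄(s)` solves the state-space BR10
equation `dX̄/ds = −(1/(M−1)) X̄ (I−U) X̄ᵀ Hᵀ R⁻¹ [ (1/2) H X̄ (I+U) − y·1ᵀ ]` with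
`X̄(0) = X̄^b`. -/
theorem stmt_13 {N L M : ℕ} (hM : 2 ≤ M)
    (H : Matrix (Fin L) (Fin N) ℝ) (R : Matrix (Fin L) (Fin L) ℝ) (hR : R.PosDef)
    (y : Fin L → ℝ)
    (one : Fin M → ℝ) (hone : one = fun _ => 1)
    (U : Matrix (Fin M) (Fin M) ℝ) (hU : U = (M : ℝ)⁻¹ • vecMulVec one one)
    (Xbarb : Matrix (Fin N) (Fin M) ℝ)
    (Ybarb : Matrix (Fin L) (Fin M) ℝ) (hYbarb : Ybarb = H * Xbarb)
    (Wbar : ℝ → Matrix (Fin M) (Fin M) ℝ)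
    (hWbar : ∀ s ∈ Set.Icc (0:ℝ) 1,
      HasDerivWithinAt Wbar
        (-(1 / ((M : ℝ) - 1)) • (Wbar s * (1 - U) * (Wbar s)ᵀ * Ybarbᵀ * R⁻¹ *
          ((1 / 2 : ℝ) • (Ybarb * Wbar s * (1 + U)) - vecMulVec y one)))
        (Set.Icc 0 1) s)
    (hWbar0 : Wbar 0 = 1)
    (Xbar : ℝ → Matrix (Fin N) (Fin M) ℝ) (hXbar : ∀ s : ℝ, Xbar s = Xbarb * Wbar s) :
    (∀ s ∈ Set.Icc (0:ℝ) 1,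
      HasDerivWithinAt Xbar
        (-(1 / ((M : ℝ) - 1)) • (Xbar s * (1 - U) * (Xbar s)ᵀ * Hᵀ * R⁻¹ *
          ((1 / 2 : ℝ) • (H * Xbar s * (1 + U)) - vecMulVec y one)))
        (Set.Icc 0 1) s) ∧
    Xbar 0 = Xbarb := by
  constructor
  · intro s hs
    let lin : Matrix (Fin M) (Fin M) ℝ →ₗ[ℝ] Matrix (Fin N) (Fin M) ℝ :=
      { toFun := fun W => Xbarb * W
        map_add' := fun a b => Matrix.mul_add _ _ _
        map_smul' := fun c a => (Matrix.mul_smul _ _ _) }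
    have h := (lin.toContinuousLinearMap.hasFDerivAt.comp_hasDerivWithinAt s (hWbar s hs))
    have hfun : (fun t => lin.toContinuousLinearMap (Wbar t)) = Xbar := by
      funext t; rw [hXbar]; rfl
    rw [Function.comp_def, hfun] at h
    simp only [LinearMap.coe_toContinuousLinearMap', LinearMap.coe_mk, AddHom.coe_mk, lin] at h
    change HasDerivWithinAt Xbar ((Xbarb : Matrix (Fin N) (Fin M) ℝ) *
      (-(1 / ((M : ℝ) - 1)) • (Wbar s * (1 - U) * (Wbar s)ᵀ * Ybarbᵀ * R⁻¹ *
        ((1 / 2 : ℝ) • (Ybarb * Wbar s * (1 + U)) - vecMulVec y one)) :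
          Matrix (Fin M) (Fin M) ℝ)) _ _ at h
    convert h using 1
    rw [hXbar, hYbarb, Matrix.transpose_mul, Matrix.mul_smul]
    simp only [Matrix.transpose_mul, Matrix.mul_assoc]
  · rw [hXbar, hWbar0, Matrix.mul_one]
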